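/- Let G be a finite abelian group, r ∈ ℕ even, and (e_1,…,e_r) ∈ G^r independent with gcd(ord(e_i), ord(e_j)) > 1 for all i,j. Set e_0 = −e_1 − ⋯ − e_r and ē = Σ_{i=1}^r (−1)^{i+1} e_i. Then U = ē · Π_{i odd}(−e_0 − e_i) · Π_{i even}(e_0 + e_i) is a minimal zero-sum sequence over G. -/

import Mathlib

/-- A minimal zero-sum sequence over an abelian group. -/
def IsMinZS {G : Type*} [AddCommGroup G] (S : Multiset G) : Prop :=
  S ≠ 0 ∧ S.sum = 0 ∧ ∀ T : Multiset G, T ≤ S → T ≠ 0 → T ≠ S → T.sum ≠ 0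

section Aux

variable {α β : Type*}

lemma aux_le_cons_decomp {t s : Multiset α} {a : α} [DecidableEq α] (h : t ≤ a ::ₘ s) :
    t ≤ s ∨ ∃ t', t = a ::ₘ t' ∧ t' ≤ s := by
  by_cases ha : a ∈ t
  · right
    refine ⟨t.erase a, (Multiset.cons_erase ha).symm, ?_⟩
    simpa using Multiset.erase_le_erase a h
  · left
    exact (Multiset.le_cons_of_notMem ha).1 h

lemma aux_le_map {f : α → β} [DecidableEq β] :
    ∀ (s : Multiset α) (t : Multiset β), t ≤ s.map f → ∃ s', s' ≤ s ∧ t = s'.map f := by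
  intro s
  induction s using Multiset.induction with
  | empty =>
    intro t ht
    simp only [Multiset.map_zero, Multiset.le_zero] at ht
    exact ⟨0, le_refl _, by simp [ht]⟩
  | cons a s ih =>
    intro t ht
    rw [Multiset.map_cons] at ht
    rcases aux_le_cons_decomp ht with h | ⟨t', rfl, ht'⟩
    · obtain ⟨s', hs', rfl⟩ := ih t h
      exact ⟨s', hs'.trans (Multiset.le_cons_self _ _), rfl⟩
    · obtain ⟨s', hs', rfl⟩ := ih t' ht'
      exact ⟨a ::ₘ s', Multiset.cons_le_cons _ hs', by simp⟩

lemma aux_map_eq_sum_singleton (f : α → β) (s : Finset α) :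
    (Multiset.map f s.val) = ∑ i ∈ s, ({f i} : Multiset β) := by
  rw [Finset.sum]
  induction s.val using Multiset.induction with
  | empty => simp
  | cons a m ih => simp [ih]

/-- The arithmetic core. -/
lemma aux_core (r : ℕ) (hr : Even r) (hr0 : 0 < r) (n : Fin r → ℕ)
    (hgcd : ∀ i j, 1 < Nat.gcd (n i) (n j))
    (ε : ℤ) (hε : ε = 0 ∨ ε = 1) (A : Finset (Fin r))
    (hdvd : ∀ i, (n i : ℤ) ∣
      ε * (-1) ^ (i : ℕ) + (∑ j ∈ A, (-1 : ℤ) ^ (j : ℕ)) -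
        (if i ∈ A then ((-1 : ℤ) ^ (i : ℕ)) else 0)) :
    (ε = 0 ∧ A = ∅) ∨ (ε = 1 ∧ A = Finset.univ) := by
  classical
  set k : ℤ := ∑ j ∈ A, (-1 : ℤ) ^ (j : ℕ) with hk
  set d : Fin r → ℤ := fun i => ε - (if i ∈ A then 1 else 0) with hd
  set c : Fin r → ℤ := fun i =>
    ε * (-1) ^ (i : ℕ) + k - (if i ∈ A then ((-1 : ℤ) ^ (i : ℕ)) else 0) with hc
  have hcd : ∀ i, c i = k + (-1) ^ (i : ℕ) * d i := by
    intro i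
    simp only [hc, hd]
    split_ifs <;> ring
  have hn1 : ∀ i, 1 < n i := by
    intro i
    have := hgcd i i
    rwa [Nat.gcd_self] at this
  have hone : ∀ (i : Fin r) (t : ℤ), (t = 1 ∨ t = -1) → ¬ ((n i : ℤ) ∣ (-1) ^ (i : ℕ) * t) := by
    intro i t ht h
    have hu : IsUnit ((n i : ℤ)) :=
      isUnit_of_dvd_unit h ((IsUnit.pow (i : ℕ) isUnit_one.neg).mul (Int.isUnit_iff.2 ht))
    rw [Int.isUnit_iff] at hu
    have := hn1 i
    omega
  by_cases hall : ∀ i, (i ∈ A ↔ ε = 1)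
  · rcases hε with hε | hε
    · left
      refine ⟨hε, Finset.eq_empty_of_forall_notMem fun i hi => ?_⟩
      have := (hall i).1 hi
      omega
    · right
      exact ⟨hε, Finset.eq_univ_of_forall fun i => (hall i).2 hε⟩
  · exfalso
    push_neg at hall
    obtain ⟨i0, hi0⟩ := hall
    have hd0 : d i0 = 1 ∨ d i0 = -1 := by
      simp only [hd]
      by_cases h : i0 ∈ A <;> simp [h] at hi0 ⊢ <;> omega
    -- every index is "abnormal": d j ≠ 0
    have habn : ∀ j, d j ≠ 0 := by
      intro j hj
      have hcj : c j = k := by rw [hcd j, hj]; ring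
      set g : ℕ := Nat.gcd (n j) (n i0) with hg
      have hg1 : 1 < g := hgcd j i0
      have hgj : (g : ℤ) ∣ c j := dvd_trans (Int.natCast_dvd_natCast.2 (Nat.gcd_dvd_left _ _)) (hdvd j)
      have hgi : (g : ℤ) ∣ c i0 := dvd_trans (Int.natCast_dvd_natCast.2 (Nat.gcd_dvd_right _ _)) (hdvd i0)
      have : (g : ℤ) ∣ (-1) ^ (i0 : ℕ) * d i0 := by
        have := dvd_sub hgi hgj
        rwa [hcd i0, hcj, add_sub_cancel_left] at this
      have hu : IsUnit ((g : ℤ)) :=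
        isUnit_of_dvd_unit this ((IsUnit.pow (i0 : ℕ) isUnit_one.neg).mul (Int.isUnit_iff.2 hd0))
      rw [Int.isUnit_iff] at hu
      omega
    have hk0 : (∑ j : Fin r, (-1 : ℤ) ^ (j : ℕ)) = 0 := by
      rw [Fin.sum_univ_eq_sum_range (fun m => (-1 : ℤ) ^ m) r, neg_one_geom_sum, if_pos hr]
    rcases hε with hε | hε
    · -- ε = 0 : all j ∈ A, so A = univ, k = 0, c i0 = -(-1)^i0
      have hAu : A = Finset.univ := by
        refine Finset.eq_univ_of_forall fun j => ?_
        by_contra h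
        exact habn j (by simp [hd, h, hε])
      have hkz : k = 0 := by rw [hk, hAu, hk0]
      have hdi0 : d i0 = -1 := by simp [hd, hAu, hε]
      have := hdvd i0
      rw [show ε * (-1) ^ (i0 : ℕ) + k - (if i0 ∈ A then ((-1 : ℤ) ^ (i0 : ℕ)) else 0)
          = c i0 from rfl, hcd i0, hkz, hdi0, zero_add] at this
      exact hone i0 (-1) (Or.inr rfl) this
    · -- ε = 1 : all j ∉ A, so A = ∅, k = 0, c i0 = (-1)^i0
      have hAe : A = ∅ := by
        refine Finset.eq_empty_of_forall_notMem fun j hj => ?_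
        exact habn j (by simp [hd, hj, hε])
      have hkz : k = 0 := by simp [hk, hAe]
      have hdi0 : d i0 = 1 := by simp [hd, hAe, hε]
      have := hdvd i0
      rw [show ε * (-1) ^ (i0 : ℕ) + k - (if i0 ∈ A then ((-1 : ℤ) ^ (i0 : ℕ)) else 0)
          = c i0 from rfl, hcd i0, hkz, hdi0, zero_add] at this
      exact hone i0 1 (Or.inl rfl) this

end Aux

/- Indices: `i : Fin r` corresponds to the index `i+1 ∈ [1,r]` of the paper, so
the paper's odd indices are those with `Even (i : ℕ)`.  With `e₀ = -∑ e j`, the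
entry `-e₀ - eᵢ` equals `(∑ j, e j) - eᵢ` and `e₀ + eᵢ` equals `eᵢ - ∑ j, e j`,
and `ē = ∑ i, (-1)^i • eᵢ`. -/
theorem stmt16 (G : Type*) [AddCommGroup G] [Fintype G]
    (r : ℕ) (hr : Even r) (hr0 : 0 < r) (e : Fin r → G)
    (hne : ∀ i, e i ≠ 0)
    (hindep : ∀ c : Fin r → ℤ, ∑ i, c i • e i = 0 → ∀ i, c i • e i = 0)
    (hgcd : ∀ i j, 1 < Nat.gcd (addOrderOf (e i)) (addOrderOf (e j))) :
    IsMinZS ((∑ i : Fin r, (-1 : ℤ) ^ (i : ℕ) • e i) ::ₘ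
      ∑ i : Fin r,
        (if Even (i : ℕ) then {(∑ j, e j) - e i} else {e i - ∑ j, e j} :
          Multiset G)) := by
  classical
  set S0 : G := ∑ j, e j with hS0
  set a : Fin r → G := fun i => (-1 : ℤ) ^ (i : ℕ) • (S0 - e i) with ha
  set ebar : G := ∑ i : Fin r, (-1 : ℤ) ^ (i : ℕ) • e i with hebar
  have hsingle : ∀ i : Fin r,
      (if Even (i : ℕ) then ({S0 - e i} : Multiset G) else {e i - S0}) = {a i} := by
    intro i
    by_cases h : Even (i : ℕ)
    · simp [ha, h, Even.neg_one_pow h]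
    · simp [ha, h, Odd.neg_one_pow (Nat.not_even_iff_odd.1 h), neg_sub]
  have hM : (∑ i : Fin r,
      (if Even (i : ℕ) then ({S0 - e i} : Multiset G) else {e i - S0}))
      = Multiset.map a Finset.univ.val := by
    rw [aux_map_eq_sum_singleton a Finset.univ]
    exact Finset.sum_congr rfl fun i _ => hsingle i
  have hk0 : (∑ j : Fin r, (-1 : ℤ) ^ (j : ℕ)) = 0 := by
    rw [Fin.sum_univ_eq_sum_range (fun m => (-1 : ℤ) ^ m) r, neg_one_geom_sum, if_pos hr]
  have hkey : ∀ (ε : ℤ) (A : Finset (Fin r)),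
      ε • ebar + ∑ i ∈ A, a i
        = ∑ i : Fin r, (ε * (-1) ^ (i : ℕ) + (∑ j ∈ A, (-1 : ℤ) ^ (j : ℕ))
            - (if i ∈ A then ((-1 : ℤ) ^ (i : ℕ)) else 0)) • e i := by
    intro ε A
    have h1 : ε • ebar = ∑ i : Fin r, (ε * (-1) ^ (i : ℕ)) • e i := by
      rw [hebar, Finset.smul_sum]
      exact Finset.sum_congr rfl fun i _ => smul_smul ε _ _
    have h2 : ∑ i ∈ A, a i
        = ∑ i : Fin r, ((∑ j ∈ A, (-1 : ℤ) ^ (j : ℕ)) • e i)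
          - ∑ i : Fin r, (if i ∈ A then ((-1 : ℤ) ^ (i : ℕ)) else 0) • e i := by
      have e1 : ∑ i ∈ A, a i
          = (∑ j ∈ A, (-1 : ℤ) ^ (j : ℕ)) • S0 - ∑ i ∈ A, (-1 : ℤ) ^ (i : ℕ) • e i := by
        simp only [ha, smul_sub]
        rw [Finset.sum_sub_distrib, Finset.sum_smul]
      have e2 : ∑ i : Fin r, (if i ∈ A then ((-1 : ℤ) ^ (i : ℕ)) else 0) • e i
          = ∑ i ∈ A, (-1 : ℤ) ^ (i : ℕ) • e i := by
        have h3 : ∀ i : Fin r, (if i ∈ A then ((-1 : ℤ) ^ (i : ℕ)) else 0) • e i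
            = (if i ∈ A then ((-1 : ℤ) ^ (i : ℕ)) • e i else 0) := by
          intro i; split_ifs <;> simp
        rw [Finset.sum_congr rfl fun i _ => h3 i, Finset.sum_ite_mem, Finset.univ_inter]
      rw [e1, ← e2, hS0, Finset.smul_sum]
    rw [h1, h2, ← Finset.sum_sub_distrib, ← Finset.sum_add_distrib]
    refine Finset.sum_congr rfl fun i _ => ?_
    rw [sub_smul, add_smul, add_sub_assoc]
  refine ⟨Multiset.cons_ne_zero, ?_, ?_⟩
  · -- total sum is zero
    rw [hM, Multiset.sum_cons]
    have : (Multiset.map a Finset.univ.val).sum = ∑ i : Fin r, a i := rfl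
    rw [this]
    have h := hkey 1 Finset.univ
    rw [one_smul] at h
    rw [h]
    refine Finset.sum_eq_zero fun i _ => ?_
    rw [hk0, if_pos (Finset.mem_univ i)]
    simp
  · -- minimality
    intro T hT hT0 hTS hsum
    rw [hM] at hT hTS
    have hcore := fun (ε : ℤ) (hε : ε = 0 ∨ ε = 1) (A : Finset (Fin r))
        (h : ε • ebar + ∑ i ∈ A, a i = 0) =>
      aux_core r hr hr0 (fun i => addOrderOf (e i)) hgcd ε hε A (fun i => by
        rw [addOrderOf_dvd_iff_zsmul_eq_zero]
        exact hindep _ (by rw [← hkey ε A]; exact h) i)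
    rcases aux_le_cons_decomp hT with h | ⟨T', rfl, hT'⟩
    · -- T does not use ebar
      obtain ⟨s', hs', rfl⟩ := aux_le_map _ _ h
      set A : Finset (Fin r) := ⟨s', Multiset.nodup_of_le hs' Finset.univ.nodup⟩ with hA
      have hsumA : ∑ i ∈ A, a i = 0 := hsum
      have := hcore 0 (Or.inl rfl) A (by rw [zero_smul, zero_add]; exact hsumA)
      rcases this with ⟨-, hAe⟩ | ⟨h01, -⟩
      · have : s' = 0 := congrArg Finset.val hAe
        exact hT0 (by rw [this, Multiset.map_zero])
      · exact absurd h01 (by norm_num)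
    · -- T uses ebar
      obtain ⟨s', hs', rfl⟩ := aux_le_map _ _ hT'
      set A : Finset (Fin r) := ⟨s', Multiset.nodup_of_le hs' Finset.univ.nodup⟩ with hA
      have hsumA : ebar + ∑ i ∈ A, a i = 0 := by
        rw [Multiset.sum_cons] at hsum
        exact hsum
      have := hcore 1 (Or.inr rfl) A (by rw [one_smul]; exact hsumA)
      rcases this with ⟨h10, -⟩ | ⟨-, hAu⟩
      · exact absurd h10 one_ne_zero
      · have : s' = Finset.univ.val := congrArg Finset.val hAu
        exact hTS (by rw [this])
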